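/- Let K = {(x,y,z) ∈ ℝ³ : x,y ≥ 0, x+y ≤ 1, -1 ≤ z ≤ 1} and Q_K = P₂(ℝ³) ⊕ span{z(z²−1)} (an 11-dimensional space). Then Q_K is unisolvent with respect to the 11 functionals: evaluation at the six vertices V₁=(0,0,-1), V₂=(1,0,-1), V₃=(0,1,-1), V₄=(0,0,1), V₅=(1,0,1), V₆=(0,1,1), together with the outward normal derivative ∂v/∂n at the five face centroids M₁=(1/2,1/2,0), M₂=(0,1/2,0), M₃=(1/2,0,0), M₄=(1/3,1/3,-1), M₅=(1/3,1/3,1). That is, if v ∈ Q_K satisfies v(Vᵢ)=0 for i=1,…,6 and ∂v/∂n(Mⱼ)=0 for j=1,…,5, then v=0. -/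
import Mathlib


noncomputable section

/-- Partial derivatives of a function of three real variables. -/
def pdx (f : ℝ → ℝ → ℝ → ℝ) (a b c : ℝ) : ℝ := deriv (fun t => f t b c) a
def pdy (f : ℝ → ℝ → ℝ → ℝ) (a b c : ℝ) : ℝ := deriv (fun t => f a t c) b
def pdz (f : ℝ → ℝ → ℝ → ℝ) (a b c : ℝ) : ℝ := deriv (fun t => f a b t) c

/-- Membership in `Q_K = P₂(ℝ³) ⊕ span{z(z²−1)}`. -/
def InQK (v : ℝ → ℝ → ℝ → ℝ) : Prop :=
  ∃ (p : MvPolynomial (Fin 3) ℝ) (c : ℝ), p.totalDegree ≤ 2 ∧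
    ∀ x y z : ℝ, v x y z = MvPolynomial.eval ![x, y, z] p + c * (z * (z^2 - 1))

open MvPolynomial



def F3 (t : ℕ × ℕ × ℕ) : Fin 3 →₀ ℕ :=
  Finsupp.single 0 t.1 + Finsupp.single 1 t.2.1 + Finsupp.single 2 t.2.2

lemma F3_left_inv (m : Fin 3 →₀ ℕ) : F3 (m 0, m 1, m 2) = m := by
  ext i; fin_cases i <;> simp [F3, Finsupp.single_apply]

lemma F3_apply0 (t : ℕ × ℕ × ℕ) : (F3 t) 0 = t.1 := by
  simp [F3, Finsupp.single_apply]
lemma F3_apply1 (t : ℕ × ℕ × ℕ) : (F3 t) 1 = t.2.1 := by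
  simp [F3, Finsupp.single_apply]
lemma F3_apply2 (t : ℕ × ℕ × ℕ) : (F3 t) 2 = t.2.2 := by
  simp [F3, Finsupp.single_apply]

def T10 : Finset (ℕ × ℕ × ℕ) :=
  {(0,0,0),(1,0,0),(0,1,0),(0,0,1),(2,0,0),(0,2,0),(0,0,2),(1,1,0),(1,0,1),(0,1,1)}

lemma quad_form (p : MvPolynomial (Fin 3) ℝ) (h : p.totalDegree ≤ 2) :
    ∃ a0 a1 a2 a3 a4 a5 a6 a7 a8 a9 : ℝ, ∀ x y z : ℝ,
      MvPolynomial.eval ![x, y, z] p =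
        a0 + a1*x + a2*y + a3*z + a4*x^2 + a5*y^2 + a6*z^2 + a7*x*y + a8*x*z + a9*y*z := by
  classical
  set a : ℕ × ℕ × ℕ → ℝ := fun t => MvPolynomial.coeff (F3 t) p with ha
  refine ⟨a (0,0,0), a (1,0,0), a (0,1,0), a (0,0,1), a (2,0,0), a (0,2,0), a (0,0,2),
    a (1,1,0), a (1,0,1), a (0,1,1), ?_⟩
  intro x y z
  rw [MvPolynomial.eval_eq']
  have hprod : ∀ d : Fin 3 →₀ ℕ, (∏ i, (![x, y, z] : Fin 3 → ℝ) i ^ d i)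
      = x ^ d 0 * y ^ d 1 * z ^ d 2 := by
    intro d
    rw [Fin.prod_univ_three]
    simp
  have key : (∑ d ∈ p.support, coeff d p * ∏ i, (![x, y, z] : Fin 3 → ℝ) i ^ d i)
      = ∑ t ∈ T10, a t * (x ^ t.1 * y ^ t.2.1 * z ^ t.2.2) := by
    have step1 : (∑ d ∈ p.support, coeff d p * ∏ i, (![x, y, z] : Fin 3 → ℝ) i ^ d i)
        = ∑ d ∈ p.support,
            (fun t : ℕ × ℕ × ℕ => a t * (x ^ t.1 * y ^ t.2.1 * z ^ t.2.2))
              ((fun d : Fin 3 →₀ ℕ => (d 0, d 1, d 2)) d) := by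
      refine Finset.sum_congr rfl fun d hd => ?_
      rw [hprod]
      simp [ha, F3_left_inv d]
    have hinj : ∀ d ∈ p.support, ∀ e ∈ p.support,
        (fun d : Fin 3 →₀ ℕ => (d 0, d 1, d 2)) d = (fun d : Fin 3 →₀ ℕ => (d 0, d 1, d 2)) e →
          d = e := by
      intro d _ e _ hde
      simp only [Prod.mk.injEq] at hde
      have := congrArg F3 (Prod.ext (hde.1) (Prod.ext hde.2.1 hde.2.2) :
        ((d 0, d 1, d 2) : ℕ × ℕ × ℕ) = (e 0, e 1, e 2))
      rwa [F3_left_inv, F3_left_inv] at this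
    have himg := Finset.sum_image
      (f := fun t : ℕ × ℕ × ℕ => a t * (x ^ t.1 * y ^ t.2.1 * z ^ t.2.2)) hinj
    have hsub : Finset.image (fun d : Fin 3 →₀ ℕ => (d 0, d 1, d 2)) p.support ⊆ T10 := by
      intro t ht
      simp only [Finset.mem_image] at ht
      obtain ⟨d, hd, rfl⟩ := ht
      have hsum : d 0 + d 1 + d 2 ≤ 2 := by
        have h1 : d.sum (fun _ n => n) ≤ p.totalDegree :=
          MvPolynomial.le_totalDegree hd
        have h2 : d.sum (fun _ n => n) = ∑ i, d i := by
          rw [Finsupp.sum_fintype]; intro; rfl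
        rw [h2, Fin.sum_univ_three] at h1
        omega
      simp only [T10, Finset.mem_insert, Finset.mem_singleton, Prod.mk.injEq]
      omega
    have hzero : ∀ t ∈ T10,
        t ∉ Finset.image (fun d : Fin 3 →₀ ℕ => (d 0, d 1, d 2)) p.support →
          a t * (x ^ t.1 * y ^ t.2.1 * z ^ t.2.2) = 0 := by
      intro t _ ht
      have : coeff (F3 t) p = 0 := by
        by_contra hc
        have hmem : F3 t ∈ p.support := MvPolynomial.mem_support_iff.mpr hc
        apply ht
        refine Finset.mem_image.mpr ⟨F3 t, hmem, ?_⟩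
        simp [F3_apply0, F3_apply1, F3_apply2]
      simp [ha, this]
    rw [step1, ← himg, Finset.sum_subset hsub hzero]
  refine key.trans ?_
  rw [show T10 = {(0,0,0),(1,0,0),(0,1,0),(0,0,1),(2,0,0),(0,2,0),(0,0,2),(1,1,0),(1,0,1),(0,1,1)} from rfl]
  rw [Finset.sum_insert (by decide), Finset.sum_insert (by decide), Finset.sum_insert (by decide),
    Finset.sum_insert (by decide), Finset.sum_insert (by decide), Finset.sum_insert (by decide),
    Finset.sum_insert (by decide), Finset.sum_insert (by decide), Finset.sum_insert (by decide),
    Finset.sum_singleton]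
  ring

lemma deriv_cubic (A B C D : ℝ) (x : ℝ) :
    deriv (fun t : ℝ => A + B * t + C * t ^ 2 + D * t ^ 3) x
      = B + 2 * C * x + 3 * D * x ^ 2 := by
  have h : HasDerivAt (fun t : ℝ => A + B * t + C * t ^ 2 + D * t ^ 3)
      (B + 2 * C * x + 3 * D * x ^ 2) x := by
    have h1 : HasDerivAt (fun t : ℝ => A + B * t + C * t ^ 2 + D * t ^ 3)
        (0 + B * 1 + C * (2 * x ^ 1) + D * (3 * x ^ 2)) x := by
      exact (((hasDerivAt_const x A).add ((hasDerivAt_id x).const_mul B)).add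
        ((hasDerivAt_pow 2 x).const_mul C)).add ((hasDerivAt_pow 3 x).const_mul D)
    convert h1 using 1
    ring
  exact h.deriv

/-- Unisolvency of the second 11-node prism element: if `v ∈ Q_K` vanishes at
the six vertices of the reference prism and its outward normal derivative
vanishes at the five face centroids, then `v = 0`. -/
theorem element2_unisolvent (v : ℝ → ℝ → ℝ → ℝ) (hv : InQK v)
    (hV1 : v 0 0 (-1) = 0) (hV2 : v 1 0 (-1) = 0) (hV3 : v 0 1 (-1) = 0)
    (hV4 : v 0 0 1 = 0) (hV5 : v 1 0 1 = 0) (hV6 : v 0 1 1 = 0)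
    (hM1 : (1 / Real.sqrt 2) * (pdx v (1/2) (1/2) 0 + pdy v (1/2) (1/2) 0) = 0)
    (hM2 : -pdx v 0 (1/2) 0 = 0)
    (hM3 : -pdy v (1/2) 0 0 = 0)
    (hM4 : -pdz v (1/3) (1/3) (-1) = 0)
    (hM5 : pdz v (1/3) (1/3) 1 = 0) :
    ∀ x y z : ℝ, v x y z = 0 := by
  obtain ⟨p, cc, hdeg, hform⟩ := hv
  obtain ⟨a0, a1, a2, a3, a4, a5, a6, a7, a8, a9, hq⟩ := quad_form p hdeg
  have hv' : ∀ x y z : ℝ, v x y z =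
      a0 + a1*x + a2*y + a3*z + a4*x^2 + a5*y^2 + a6*z^2 + a7*x*y + a8*x*z + a9*y*z
        + cc * (z * (z^2 - 1)) := by
    intro x y z; rw [hform, hq]
  have hpdx : ∀ b c xx : ℝ, pdx v xx b c = (a1 + a7*b + a8*c) + 2*a4*xx := by
    intro b c xx
    unfold pdx
    rw [show (fun t => v t b c) = (fun t : ℝ =>
        (a0 + a2*b + a3*c + a5*b^2 + a6*c^2 + a9*b*c + cc*(c*(c^2-1)))
          + (a1 + a7*b + a8*c) * t + a4 * t^2 + 0 * t^3) from
      funext fun t => by rw [hv']; ring]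
    rw [deriv_cubic]; ring
  have hpdy : ∀ a c yy : ℝ, pdy v a yy c = (a2 + a7*a + a9*c) + 2*a5*yy := by
    intro a c yy
    unfold pdy
    rw [show (fun t => v a t c) = (fun t : ℝ =>
        (a0 + a1*a + a3*c + a4*a^2 + a6*c^2 + a8*a*c + cc*(c*(c^2-1)))
          + (a2 + a7*a + a9*c) * t + a5 * t^2 + 0 * t^3) from
      funext fun t => by rw [hv']; ring]
    rw [deriv_cubic]; ring
  have hpdz : ∀ a b zz : ℝ, pdz v a b zz =
      (a3 + a8*a + a9*b - cc) + 2*a6*zz + 3*cc*zz^2 := by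
    intro a b zz
    unfold pdz
    rw [show (fun t => v a b t) = (fun t : ℝ =>
        (a0 + a1*a + a2*b + a4*a^2 + a5*b^2 + a7*a*b)
          + (a3 + a8*a + a9*b - cc) * t + a6 * t^2 + cc * t^3) from
      funext fun t => by rw [hv']; ring]
    rw [deriv_cubic]
  rw [hv'] at hV1 hV2 hV3 hV4 hV5 hV6
  rw [hpdx, hpdy] at hM1
  rw [hpdx] at hM2
  rw [hpdy] at hM3
  rw [hpdz] at hM4 hM5
  have h2 : (1 / Real.sqrt 2 : ℝ) ≠ 0 := by positivity
  have hSum := (mul_eq_zero.mp hM1).resolve_left h2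
  norm_num at hV1 hV2 hV3 hV4 hV5 hV6 hSum hM2 hM3 hM4 hM5
  intro x y z
  rw [hv']
  have e3 : a3 = 0 := by linarith
  have e8 : a8 = 0 := by linarith
  have e9 : a9 = 0 := by linarith
  have e7 : a7 = 0 := by linarith
  have e1 : a1 = 0 := by linarith
  have e2 : a2 = 0 := by linarith
  have e4 : a4 = 0 := by linarith
  have e5 : a5 = 0 := by linarith
  have ec : cc = 0 := by linarith
  have e6 : a6 = 0 := by linarith
  have e0 : a0 = 0 := by linarith
  rw [e0, e1, e2, e3, e4, e5, e6, e7, e8, e9, ec]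
  ring
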